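/- Let Σ be a set of operation symbols, each with assigned input and output objects in a small monoidal category C. Let Arr_Σ(X, Y) be the set of formal arrow terms generated by arr(f) for f ∈ C(X, Y), the operation symbols, sequential composition >>>, and first_Z, quotiented by the nine arrow axioms (associativity of >>>, functoriality of arr, unit laws, naturality of first with respect to pure maps on the second component, first interacting with projections and associators, first(arr f) = arr(f × id), and first(a >>> b) = first(a) >>> first(b)). Then A_Σ(X, Y) := Arr_Σ(X, Y)/∼ carries the structure of a strong promonad on C: it is functorial in X (contravariantly) and Y (covariantly) via precomposition and postcomposition with arr, has unit η = arr, associative multiplication given by >>>, and a strength given by first satisfying the strength laws. -/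

import Mathlib

open CategoryTheory MonoidalCategory

universe u v

/-- A signature of operation symbols over a category `C`: each operation symbol has a
coarity (source) and an arity (target) object. -/
structure Signature (C : Type u) [Category.{v} C] where
  Op : Type v
  src : Op → C
  tgt : Op → C

/-- Formal arrow terms over a signature: generated by `arr f` for morphisms `f` of `C`,
the operation symbols, sequential composition `>>>` (`seq`), and `first_Z`. -/
inductive ArrTm {C : Type u} [Category.{v} C] [CartesianMonoidalCategory C]
    (S : Signature C) : C → C → Type (max u v)
  | arr : ∀ {X Y : C}, (X ⟶ Y) → ArrTm S X Y
  | op : ∀ o : S.Op, ArrTm S (S.src o) (S.tgt o)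
  | seq : ∀ {X Y Z : C}, ArrTm S X Y → ArrTm S Y Z → ArrTm S X Z
  | first : ∀ {X Y : C} (Z : C), ArrTm S X Y → ArrTm S (X ⊗ Z) (Y ⊗ Z)

/-- The congruence generated by the nine arrow axioms (Fig. "axioms of the congruence
relation"): associativity of `>>>`, functoriality of `arr`, unit laws, commutation of
`first` with pure maps on the second component, with projections and with associators,
`first (arr f) = arr (f × id)`, and `first (a >>> b) = first a >>> first b`. -/
inductive ArrRel {C : Type u} [Category.{v} C] [CartesianMonoidalCategory C]
    {S : Signature C} : ∀ {X Y : C}, ArrTm S X Y → ArrTm S X Y → Prop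
  | refl : ∀ {X Y} (a : ArrTm S X Y), ArrRel a a
  | symm : ∀ {X Y} {a b : ArrTm S X Y}, ArrRel a b → ArrRel b a
  | trans : ∀ {X Y} {a b c : ArrTm S X Y}, ArrRel a b → ArrRel b c → ArrRel a c
  | seq_congr : ∀ {X Y Z} {a a' : ArrTm S X Y} {b b' : ArrTm S Y Z},
      ArrRel a a' → ArrRel b b' → ArrRel (a.seq b) (a'.seq b')
  | first_congr : ∀ {X Y} (Z) {a a' : ArrTm S X Y},
      ArrRel a a' → ArrRel (a.first Z) (a'.first Z)
  | assoc : ∀ {W X Y Z} (a : ArrTm S W X) (b : ArrTm S X Y) (c : ArrTm S Y Z),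
      ArrRel ((a.seq b).seq c) (a.seq (b.seq c))
  | arr_comp : ∀ {X Y Z} (f : X ⟶ Y) (g : Y ⟶ Z),
      ArrRel (ArrTm.arr (S := S) (f ≫ g)) ((ArrTm.arr f).seq (ArrTm.arr g))
  | id_seq : ∀ {X Y} (a : ArrTm S X Y), ArrRel ((ArrTm.arr (𝟙 X)).seq a) a
  | seq_id : ∀ {X Y} (a : ArrTm S X Y), ArrRel (a.seq (ArrTm.arr (𝟙 Y))) a
  | first_pure : ∀ {X Y Z Z'} (a : ArrTm S X Y) (f : Z ⟶ Z'),
      ArrRel ((a.first Z).seq (ArrTm.arr (Y ◁ f)))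
        ((ArrTm.arr (X ◁ f)).seq (a.first Z'))
  | first_fst : ∀ {X Y Z} (a : ArrTm S X Y),
      ArrRel ((a.first Z).seq (ArrTm.arr (CartesianMonoidalCategory.fst Y Z)))
        ((ArrTm.arr (CartesianMonoidalCategory.fst X Z)).seq a)
  | first_assoc : ∀ {X Y} (Z W : C) (a : ArrTm S X Y),
      ArrRel ((a.first (Z ⊗ W)).seq (ArrTm.arr (α_ Y Z W).inv))
        ((ArrTm.arr (α_ X Z W).inv).seq ((a.first Z).first W))
  | first_arr : ∀ {X Y} (Z : C) (f : X ⟶ Y),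
      ArrRel ((ArrTm.arr (S := S) f).first Z) (ArrTm.arr (f ▷ Z))
  | first_seq : ∀ {X Y Z} (W : C) (a : ArrTm S X Y) (b : ArrTm S Y Z),
      ArrRel ((a.seq b).first W) ((a.first W).seq (b.first W))

/-- `A_Σ(X, Y)`: arrow terms modulo the arrow congruence. -/
def ASig {C : Type u} [Category.{v} C] [CartesianMonoidalCategory C]
    (S : Signature C) (X Y : C) : Type (max u v) :=
  Quot (ArrRel (S := S) (X := X) (Y := Y))

namespace FreeStrongPromonadAux

variable {C : Type u} [Category.{v} C] [CartesianMonoidalCategory C] {S : Signature C}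

def mapQ {X' X Y Y' : C} (f : X' ⟶ X) (g : Y ⟶ Y') : ASig S X Y → ASig S X' Y' :=
  Quot.map (fun a => ((ArrTm.arr f).seq a).seq (ArrTm.arr g))
    (fun _ _ h => ArrRel.seq_congr (ArrRel.seq_congr (ArrRel.refl _) h) (ArrRel.refl _))

def mulQ {X Y Z : C} : ASig S X Y → ASig S Y Z → ASig S X Z :=
  Quot.lift₂ (fun a b => Quot.mk _ (a.seq b))
    (fun _ _ _ h => Quot.sound (ArrRel.seq_congr (ArrRel.refl _) h))
    (fun _ _ _ h => Quot.sound (ArrRel.seq_congr h (ArrRel.refl _)))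

def stQ {X Y : C} (Z : C) : ASig S X Y → ASig S (X ⊗ Z) (Y ⊗ Z) :=
  Quot.map (fun a => a.first Z) (fun _ _ h => ArrRel.first_congr Z h)

end FreeStrongPromonadAux

/-- Lemma 6.2 (free strong promonad on a signature): `A_Σ := ArrTm/∼` carries the
structure of a strong promonad on `C`: it is contravariantly/covariantly functorial via
pre- and post-composition with `arr`, has unit `η = arr`, associative multiplication
induced by `>>>` with `arr (𝟙)` as two-sided unit, and a strength induced by `first`
satisfying the strength laws. -/
theorem free_strong_promonad {C : Type u} [Category.{v} C] [CartesianMonoidalCategory C]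
    (S : Signature C) :
    ∃ (map : ∀ (X' X Y Y' : C), (X' ⟶ X) → (Y ⟶ Y') → ASig S X Y → ASig S X' Y')
      (mul : ∀ (X Y Z : C), ASig S X Y → ASig S Y Z → ASig S X Z)
      (st : ∀ (X Y Z : C), ASig S X Y → ASig S (X ⊗ Z) (Y ⊗ Z)),
      -- the operations are induced by `arr`, `>>>` and `first`
      (∀ (X' X Y Y' : C) (f : X' ⟶ X) (g : Y ⟶ Y') (a : ArrTm S X Y),
        map X' X Y Y' f g (Quot.mk _ a)
          = Quot.mk _ (((ArrTm.arr f).seq a).seq (ArrTm.arr g))) ∧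
      (∀ (X Y Z : C) (a : ArrTm S X Y) (b : ArrTm S Y Z),
        mul X Y Z (Quot.mk _ a) (Quot.mk _ b) = Quot.mk _ (a.seq b)) ∧
      (∀ (X Y Z : C) (a : ArrTm S X Y),
        st X Y Z (Quot.mk _ a) = Quot.mk _ (a.first Z)) ∧
      -- functoriality of `A_Σ` in both variables
      (∀ (X Y : C) (a : ASig S X Y), map X X Y Y (𝟙 X) (𝟙 Y) a = a) ∧
      (∀ (X'' X' X Y Y' Y'' : C) (f' : X'' ⟶ X') (f : X' ⟶ X) (g : Y ⟶ Y')
        (g' : Y' ⟶ Y'') (a : ASig S X Y),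
        map X'' X Y Y'' (f' ≫ f) (g ≫ g') a = map X'' X' Y' Y'' f' g' (map X' X Y Y' f g a)) ∧
      -- naturality of the unit `η = arr`
      (∀ (X' X Y Y' : C) (f : X' ⟶ X) (g : Y ⟶ Y') (h : X ⟶ Y),
        map X' X Y Y' f g (Quot.mk _ (ArrTm.arr h)) = Quot.mk _ (ArrTm.arr (f ≫ h ≫ g))) ∧
      -- monoid (promonad) laws: `η (𝟙)` is a two-sided unit and `mul` is associative
      (∀ (X Y : C) (a : ASig S X Y),
        mul X X Y (Quot.mk _ (ArrTm.arr (𝟙 X))) a = a) ∧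
      (∀ (X Y : C) (a : ASig S X Y),
        mul X Y Y a (Quot.mk _ (ArrTm.arr (𝟙 Y))) = a) ∧
      (∀ (W X Y Z : C) (a : ASig S W X) (b : ASig S X Y) (c : ASig S Y Z),
        mul W Y Z (mul W X Y a b) c = mul W X Z a (mul X Y Z b c)) ∧
      -- strength laws
      (∀ (X Y Z : C) (f : X ⟶ Y),
        st X Y Z (Quot.mk _ (ArrTm.arr f)) = Quot.mk _ (ArrTm.arr (f ▷ Z))) ∧
      (∀ (X Y W Z : C) (a : ASig S X Y) (b : ASig S Y W),
        st X W Z (mul X Y W a b) = mul (X ⊗ Z) (Y ⊗ Z) (W ⊗ Z) (st X Y Z a) (st Y W Z b)) ∧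
      (∀ (X Y Z Z' : C) (h : Z ⟶ Z') (a : ASig S X Y),
        mul (X ⊗ Z) (Y ⊗ Z) (Y ⊗ Z') (st X Y Z a) (Quot.mk _ (ArrTm.arr (Y ◁ h)))
          = mul (X ⊗ Z) (X ⊗ Z') (Y ⊗ Z') (Quot.mk _ (ArrTm.arr (X ◁ h))) (st X Y Z' a)) ∧
      (∀ (X Y Z : C) (a : ASig S X Y),
        mul (X ⊗ Z) (Y ⊗ Z) Y (st X Y Z a)
            (Quot.mk _ (ArrTm.arr (CartesianMonoidalCategory.fst Y Z)))
          = mul (X ⊗ Z) X Y (Quot.mk _ (ArrTm.arr (CartesianMonoidalCategory.fst X Z))) a) := by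
  open FreeStrongPromonadAux ArrRel ArrTm in
  refine ⟨fun X' X Y Y' f g => mapQ f g, fun X Y Z => mulQ, fun X Y Z => stQ Z,
    fun _ _ _ _ _ _ _ => rfl, fun _ _ _ _ _ => rfl, fun _ _ _ _ => rfl,
    ?_, ?_, ?_, ?_, ?_, ?_, ?_, ?_, ?_, ?_⟩
  · intro X Y a
    obtain ⟨a⟩ := a
    exact Quot.sound ((seq_id _).trans (id_seq a))
  · intro X'' X' X Y Y' Y'' f' f g g' a
    obtain ⟨a⟩ := a
    refine Quot.sound ?_
    refine .trans (seq_congr (seq_congr (arr_comp f' f) (refl a)) (arr_comp g g')) ?_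
    refine .trans (seq_congr (assoc _ _ _) (refl _)) ?_
    refine .trans (.symm (assoc _ _ _)) ?_
    exact seq_congr (assoc _ _ _) (refl _)
  · intro X' X Y Y' f g h
    refine Quot.sound (.symm ?_)
    refine .trans (arr_comp f (h ≫ g)) ?_
    refine .trans (seq_congr (refl _) (arr_comp h g)) ?_
    exact .symm (assoc _ _ _)
  · intro X Y a
    obtain ⟨a⟩ := a
    exact Quot.sound (id_seq a)
  · intro X Y a
    obtain ⟨a⟩ := a
    exact Quot.sound (seq_id a)
  · intro W X Y Z a b c
    obtain ⟨a⟩ := a; obtain ⟨b⟩ := b; obtain ⟨c⟩ := c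
    exact Quot.sound (assoc a b c)
  · intro X Y Z f
    exact Quot.sound (first_arr Z f)
  · intro X Y W Z a b
    obtain ⟨a⟩ := a; obtain ⟨b⟩ := b
    exact Quot.sound (first_seq Z a b)
  · intro X Y Z Z' h a
    obtain ⟨a⟩ := a
    exact Quot.sound (first_pure a h)
  · intro X Y Z a
    obtain ⟨a⟩ := a
    exact Quot.sound (first_fst a)
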